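/- Let Δ be a Cohen-Macaulay simplicial forest and let F be a leaf of Δ. Then the subcomplex Δ₁ with F(Δ₁) = F(Δ) ∖ N_Δ[F] is again a Cohen-Macaulay simplicial forest (i.e. Δ₁ is a grafted simplicial forest). -/

import Mathlib

open MvPolynomial

/-- A simplicial complex on the vertex set `V`, presented by its set of facets
(the maximal faces).  Every facet is nonempty and no facet contains another. -/
structure SimplicialComplexOn (V : Type) [Fintype V] [DecidableEq V] : Type where
  facets : Finset (Finset V)
  nonempty_facet : ∀ F ∈ facets, F.Nonempty
  antichain : ∀ F ∈ facets, ∀ G ∈ facets, F ⊆ G → F = G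

variable {V : Type} [Fintype V] [DecidableEq V]

/-- `F` is a leaf of the collection of facets `S`: either `F` is the only facet, or
there is a facet `G ≠ F` (a joint) with `F ∩ H ⊆ F ∩ G` for every facet `H ≠ F`. -/
def IsLeafOf (S : Finset (Finset V)) (F : Finset V) : Prop :=
  F ∈ S ∧ ((∀ H ∈ S, H = F) ∨
    ∃ G ∈ S, G ≠ F ∧ ∀ H ∈ S, H ≠ F → F ∩ H ⊆ F ∩ G)

/-- The forest property for a facet collection: every nonempty subcollection
(i.e. every nonempty subcomplex) has a leaf. -/
def HasLeafProp (S : Finset (Finset V)) : Prop :=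
  ∀ T ⊆ S, T.Nonempty → ∃ F, IsLeafOf T F

/-- A good leaf: a facet which is a leaf of every subcomplex containing it. -/
def IsGoodLeafOf (S : Finset (Finset V)) (F : Finset V) : Prop :=
  F ∈ S ∧ ∀ T ⊆ S, F ∈ T → IsLeafOf T F

/-- A special leaf: a leaf `F` such that for all facets `H, H' ≠ F`,
`H ∩ H' ≠ ∅` iff `(H ∩ H') \ F ≠ ∅`. -/
def IsSpecialLeafOf (S : Finset (Finset V)) (F : Finset V) : Prop :=
  IsLeafOf S F ∧ ∀ H ∈ S, ∀ H' ∈ S, H ≠ F → H' ≠ F →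
    ((H ∩ H').Nonempty ↔ ((H ∩ H') \ F).Nonempty)

/-- A matching: a subcollection of the facets that is pairwise disjoint. -/
def IsMatchingOf (S : Finset (Finset V)) (M : Finset (Finset V)) : Prop :=
  M ⊆ S ∧ ∀ F ∈ M, ∀ G ∈ M, F ≠ G → F ∩ G = ∅

/-- The matching number: maximum size of a matching. -/
noncomputable def matchingNumberOf (S : Finset (Finset V)) : ℕ :=
  sSup {n | ∃ M : Finset (Finset V), IsMatchingOf S M ∧ M.card = n}

/-- The facet collection `S` is grafted: it decomposes as `Fs ∪ Gs` where
(1) every vertex of a `G ∈ Gs` lies in some `F ∈ Fs`, (2) `Fs` is exactly the set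
of leaves of `S`, (3) `Fs` and `Gs` are disjoint, (4) the members of `Fs` are
pairwise disjoint, and (5) for each `G ∈ Gs`, deleting the facet `G` leaves a
grafted collection. -/
inductive IsGrafted : Finset (Finset V) → Prop where
  | intro (S Fs Gs : Finset (Finset V))
      (hunion : S = Fs ∪ Gs)
      (hdisj : Disjoint Fs Gs)
      (hcover : ∀ G ∈ Gs, ∀ v ∈ G, ∃ F ∈ Fs, v ∈ F)
      (hleaves : ∀ F, IsLeafOf S F ↔ F ∈ Fs)
      (hFdisj : ∀ F ∈ Fs, ∀ F' ∈ Fs, F ≠ F' → F ∩ F' = ∅)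
      (hrec : ∀ G ∈ Gs, IsGrafted (S.erase G)) :
      IsGrafted S

/-- `S` is the (minimal presentation of the) grafting of the collection `Gs`
with the simplices `Fs`. -/
def IsGraftingDecomp (S Fs Gs : Finset (Finset V)) : Prop :=
  S = Fs ∪ Gs ∧ Disjoint Fs Gs ∧
  (∀ G ∈ Gs, ∀ v ∈ G, ∃ F ∈ Fs, v ∈ F) ∧
  (∀ F, IsLeafOf S F ↔ F ∈ Fs) ∧
  (∀ F ∈ Fs, ∀ F' ∈ Fs, F ≠ F' → F ∩ F' = ∅) ∧
  (∀ G ∈ Gs, IsGrafted (S.erase G))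

/-- A Cohen-Macaulay simplicial forest, combinatorially: a grafted simplicial forest. -/
def IsCMForestFacets (S : Finset (Finset V)) : Prop :=
  HasLeafProp S ∧ IsGrafted S

/-- The closed neighborhood `N[F] = {F} ∪ {G ∈ S : G ≠ F, G ∩ F ≠ ∅}`. -/
def closedNbhd (S : Finset (Finset V)) (F : Finset V) : Finset (Finset V) :=
  insert F (S.filter fun G => G ≠ F ∧ (G ∩ F).Nonempty)

/-- The contraction of the facet collection `S` on `A`: the minimal members of
`{F \ A : F ∈ S}`. -/
def contraction (S : Finset (Finset V)) (A : Finset V) : Finset (Finset V) :=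
  (S.image fun F => F \ A).filter fun F' => ∀ G ∈ S, G \ A ⊆ F' → G \ A = F'

variable (K : Type) [Field K]

/-- The square-free monomial `x_S = ∏_{v ∈ S} x_v`. -/
noncomputable def xMon (S : Finset V) : MvPolynomial V K := ∏ v ∈ S, X v

/-- The facet ideal `I(Δ) = ⟨x_F : F a facet⟩`. -/
noncomputable def facetIdealOf (S : Finset (Finset V)) : Ideal (MvPolynomial V K) :=
  Ideal.span { p | ∃ F ∈ S, p = xMon K F }

/-- The `k`-th square-free power of an ideal: the ideal generated by all
square-free monomials lying in `I ^ k`. -/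
noncomputable def sqfreePow (I : Ideal (MvPolynomial V K)) (k : ℕ) :
    Ideal (MvPolynomial V K) :=
  Ideal.span { p | (∃ S : Finset V, p = xMon K S) ∧ p ∈ I ^ k }

/-- The depth of `R/I` with respect to the homogeneous maximal ideal
`m = ⟨x_v : v ∈ V⟩`: the largest length of an `R/I`-regular sequence of
elements of `m`. -/
noncomputable def gradedDepth (I : Ideal (MvPolynomial V K)) : ℕ :=
  sSup {n | ∃ rs : List (MvPolynomial V K), rs.length = n ∧
    (∀ r ∈ rs, r ∈ Ideal.span (Set.range (X : V → MvPolynomial V K))) ∧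
    RingTheory.Sequence.IsRegular (MvPolynomial V K ⧸ I) rs}

/-- `R/I` is Cohen-Macaulay: its depth equals its Krull dimension. -/
def IsCMQuot (I : Ideal (MvPolynomial V K)) : Prop :=
  ((gradedDepth K I : ℕ∞) : WithBot ℕ∞) = ringKrullDim (MvPolynomial V K ⧸ I)

section Statements

variable {V : Type} [Fintype V] [DecidableEq V] (K : Type) [Field K]


private lemma erase_erase_comm (S : Finset (Finset V)) (a b : Finset V) :
    (S.erase a).erase b = (S.erase b).erase a := by
  ext x
  simp only [Finset.mem_erase]
  tauto

private lemma mem_sdiff_closedNbhd {S : Finset (Finset V)} {F x : Finset V} :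
    x ∈ S \ closedNbhd S F ↔ x ∈ S ∧ x ≠ F ∧ x ∩ F = ∅ := by
  classical
  simp only [closedNbhd, Finset.mem_sdiff, Finset.mem_insert, Finset.mem_filter]
  constructor
  · rintro ⟨hx, h⟩
    have hxF : x ≠ F := fun e => h (Or.inl e)
    refine ⟨hx, hxF, ?_⟩
    by_contra hne
    exact h (Or.inr ⟨hx, hxF, Finset.nonempty_iff_ne_empty.mpr hne⟩)
  · rintro ⟨hx, hxF, hemp⟩
    refine ⟨hx, ?_⟩
    rintro (rfl | ⟨-, -, hne⟩)
    · exact hxF rfl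
    · rw [hemp] at hne
      exact Finset.not_nonempty_empty hne

private lemma isolated_isLeaf {S : Finset (Finset V)} {F : Finset V}
    (hFS : F ∈ S) (hiso : ∀ H ∈ S, H ≠ F → H ∩ F = ∅) : IsLeafOf S F := by
  by_cases h : ∃ K ∈ S, K ≠ F
  · obtain ⟨K, hK, hKF⟩ := h
    refine ⟨hFS, Or.inr ⟨K, hK, hKF, fun H hH hHF => ?_⟩⟩
    have h1 : H ∩ F = ∅ := hiso H hH hHF
    have h2 : F ∩ H = ∅ := by rw [Finset.inter_comm]; exact h1
    rw [h2]
    exact Finset.empty_subset _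
  · push_neg at h
    exact ⟨hFS, Or.inl h⟩

private lemma sdiff_closedNbhd_eq_erase {S : Finset (Finset V)} {F : Finset V}
    (hiso : ∀ H ∈ S, H ≠ F → H ∩ F = ∅) :
    S \ closedNbhd S F = S.erase F := by
  ext x
  rw [mem_sdiff_closedNbhd, Finset.mem_erase]
  constructor
  · rintro ⟨hx, hxF, -⟩; exact ⟨hxF, hx⟩
  · rintro ⟨hxF, hx⟩; exact ⟨hx, hxF, hiso x hx hxF⟩

private lemma sdiff_closedNbhd_erase {S : Finset (Finset V)} {F G : Finset V}
    (hG : G ∈ S) (hGF : G ≠ F) (hmeet : (G ∩ F).Nonempty) :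
    (S.erase G) \ closedNbhd (S.erase G) F = S \ closedNbhd S F := by
  ext x
  rw [mem_sdiff_closedNbhd, mem_sdiff_closedNbhd, Finset.mem_erase]
  constructor
  · rintro ⟨⟨-, hx⟩, h2, h3⟩; exact ⟨hx, h2, h3⟩
  · rintro ⟨hx, h2, h3⟩
    refine ⟨⟨?_, hx⟩, h2, h3⟩
    rintro rfl
    rw [h3] at hmeet
    exact Finset.not_nonempty_empty hmeet

private lemma leaf_erase_iff_of_isolated {S : Finset (Finset V)} {F H : Finset V}
    (hFS : F ∈ S) (hiso : ∀ K ∈ S, K ≠ F → K ∩ F = ∅) (hHF : H ≠ F) :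
    IsLeafOf (S.erase F) H ↔ IsLeafOf S H := by
  constructor
  · rintro ⟨hHm, hc⟩
    have hHS : H ∈ S := Finset.mem_of_mem_erase hHm
    refine ⟨hHS, Or.inr ?_⟩
    rcases hc with h1 | ⟨J, hJ, hJH, hj⟩
    · refine ⟨F, hFS, Ne.symm hHF, fun H' hH' hH'H => ?_⟩
      by_cases hf : H' = F
      · rw [hf]
      · exact absurd (h1 H' (Finset.mem_erase.mpr ⟨hf, hH'⟩)) hH'H
    · refine ⟨J, Finset.mem_of_mem_erase hJ, hJH, fun H' hH' hH'H => ?_⟩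
      by_cases hf : H' = F
      · have h0 : H ∩ F = ∅ := hiso H hHS hHF
        rw [hf, h0]
        exact Finset.empty_subset _
      · exact hj H' (Finset.mem_erase.mpr ⟨hf, hH'⟩) hH'H
  · rintro ⟨hHS, hc⟩
    have hHm : H ∈ S.erase F := Finset.mem_erase.mpr ⟨hHF, hHS⟩
    rcases hc with h1 | ⟨J, hJ, hJH, hj⟩
    · exact absurd (h1 F hFS) (Ne.symm hHF)
    · by_cases hJF : J = F
      · rw [hJF] at hj
        have hHFempty : H ∩ F = ∅ := hiso H hHS hHF
        by_cases hex : ∃ K ∈ S.erase F, K ≠ H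
        · obtain ⟨K, hK, hKH⟩ := hex
          refine ⟨hHm, Or.inr ⟨K, hK, hKH, fun H' hH' hH'H => ?_⟩⟩
          have h2 := hj H' (Finset.mem_of_mem_erase hH') hH'H
          rw [hHFempty] at h2
          rw [Finset.subset_empty.mp h2]
          exact Finset.empty_subset _
        · push_neg at hex
          exact ⟨hHm, Or.inl hex⟩
      · exact ⟨hHm, Or.inr ⟨J, Finset.mem_erase.mpr ⟨hJF, hJ⟩, hJH,
          fun H' hH' hH'H => hj H' (Finset.mem_of_mem_erase hH') hH'H⟩⟩

private lemma grafted_sdiff_closedNbhd :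
    ∀ n (S : Finset (Finset V)), S.card ≤ n → IsGrafted S →
      ∀ F : Finset V, F.Nonempty → IsLeafOf S F →
      IsGrafted (S \ closedNbhd S F) := by
  intro n
  induction n with
  | zero =>
    intro S hcard _ F _ hF
    have hS : S = ∅ := Finset.card_eq_zero.mp (Nat.le_zero.mp hcard)
    rw [hS] at hF
    exact absurd hF.1 (Finset.notMem_empty F)
  | succ n ih =>
    intro S hcard hG F hFne hF
    obtain ⟨_, Fs, Gs, hunion, hdisj, hcover, hleaves, hFdisj, hrec⟩ := hG
    have hFS : F ∈ S := hF.1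
    have hFFs : F ∈ Fs := (hleaves F).mp hF
    have hFGs : F ∉ Gs := fun h => (Finset.disjoint_left.mp hdisj hFFs) h
    by_cases hB : ∀ H ∈ S, H ≠ F → H ∩ F = ∅
    · -- F is isolated: the deletion is just erasing F
      rw [sdiff_closedNbhd_eq_erase hB]
      refine IsGrafted.intro _ (Fs.erase F) Gs ?_ ?_ ?_ ?_ ?_ ?_
      · rw [hunion, Finset.erase_union_distrib, Finset.erase_eq_of_notMem hFGs]
      · exact hdisj.mono_left (Finset.erase_subset _ _)
      · intro G hGGs v hv
        obtain ⟨F', hF', hvF'⟩ := hcover G hGGs v hv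
        refine ⟨F', Finset.mem_erase.mpr ⟨?_, hF'⟩, hvF'⟩
        intro he
        have hGS : G ∈ S := by rw [hunion]; exact Finset.mem_union_right _ hGGs
        have hGF : G ≠ F := fun e => hFGs (e ▸ hGGs)
        have h0 : G ∩ F = ∅ := hB G hGS hGF
        have : v ∈ G ∩ F := Finset.mem_inter.mpr ⟨hv, he ▸ hvF'⟩
        rw [h0] at this
        exact Finset.notMem_empty v this
      · intro H
        by_cases hHF : H = F
        · subst hHF
          constructor
          · intro hl
            exact absurd hl.1 (Finset.notMem_erase H S)
          · intro hl
            exact absurd rfl (Finset.mem_erase.mp hl).1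
        · rw [leaf_erase_iff_of_isolated hFS hB hHF, hleaves, Finset.mem_erase]
          exact (and_iff_right hHF).symm
      · intro A hA A' hA' hne
        exact hFdisj A (Finset.mem_of_mem_erase hA) A' (Finset.mem_of_mem_erase hA') hne
      · intro G hGGs
        have hGS : G ∈ S := by rw [hunion]; exact Finset.mem_union_right _ hGGs
        have hGF : G ≠ F := fun e => hFGs (e ▸ hGGs)
        have hFmem : F ∈ S.erase G := Finset.mem_erase.mpr ⟨Ne.symm hGF, hFS⟩
        have hiso2 : ∀ H ∈ S.erase G, H ≠ F → H ∩ F = ∅ :=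
          fun H hH => hB H (Finset.mem_of_mem_erase hH)
        have hleaf2 : IsLeafOf (S.erase G) F := isolated_isLeaf hFmem hiso2
        have hcard2 : (S.erase G).card ≤ n := by
          have h1 := Finset.card_erase_of_mem hGS
          have h2 : 0 < S.card := Finset.card_pos.mpr ⟨G, hGS⟩
          omega
        have hrec2 := ih (S.erase G) hcard2 (hrec G hGGs) F hFne hleaf2
        rw [sdiff_closedNbhd_eq_erase hiso2] at hrec2
        rw [erase_erase_comm]
        exact hrec2
    · -- some facet meets F
      push_neg at hB
      obtain ⟨G0, hG0S, hG0F, hG0ne⟩ := hB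
      obtain ⟨-, hc⟩ := hF
      rcases hc with h1 | ⟨J, hJS, hJF, hjoint⟩
      · exact absurd (h1 G0 hG0S) hG0F
      · have hFG0ne : (F ∩ G0).Nonempty := by
          rw [Finset.inter_comm]
          exact hG0ne
        have hFJne : (F ∩ J).Nonempty := hFG0ne.mono (hjoint G0 hG0S hG0F)
        have hJmeets : (J ∩ F).Nonempty := by rw [Finset.inter_comm]; exact hFJne
        -- any facet meeting F is in Gs
        have toGs : ∀ G' ∈ S, G' ≠ F → (G' ∩ F).Nonempty → G' ∈ Gs := by
          intro G' hG'S hG'F hG'ne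
          have hnotFs : G' ∉ Fs := by
            intro hmem
            have h0 := hFdisj F hFFs G' hmem (Ne.symm hG'F)
            rw [Finset.inter_comm] at h0
            rw [h0] at hG'ne
            exact Finset.not_nonempty_empty hG'ne
          rw [hunion] at hG'S
          rcases Finset.mem_union.mp hG'S with h | h
          · exact absurd h hnotFs
          · exact h
        have finish : ∀ G' ∈ S, G' ≠ F → (G' ∩ F).Nonempty →
            IsLeafOf (S.erase G') F → IsGrafted (S \ closedNbhd S F) := by
          intro G' hG'S hG'F hG'ne hleaf'
          have hG'Gs : G' ∈ Gs := toGs G' hG'S hG'F hG'ne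
          have hcard2 : (S.erase G').card ≤ n := by
            have h1 := Finset.card_erase_of_mem hG'S
            have h2 : 0 < S.card := Finset.card_pos.mpr ⟨G', hG'S⟩
            omega
          have hrec2 := ih (S.erase G') hcard2 (hrec G' hG'Gs) F hFne hleaf'
          rwa [sdiff_closedNbhd_erase hG'S hG'F hG'ne] at hrec2
        by_cases hBJ : ∃ G' ∈ S, G' ≠ F ∧ (G' ∩ F).Nonempty ∧ G' ≠ J
        · obtain ⟨G', hG'S, hG'F, hG'ne, hG'J⟩ := hBJ
          apply finish G' hG'S hG'F hG'ne
          refine ⟨Finset.mem_erase.mpr ⟨Ne.symm hG'F, hFS⟩, Or.inr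
            ⟨J, Finset.mem_erase.mpr ⟨Ne.symm hG'J, hJS⟩, hJF,
              fun H hH hHF => hjoint H (Finset.mem_of_mem_erase hH) hHF⟩⟩
        · -- J is the only facet meeting F
          push_neg at hBJ
          apply finish J hJS hJF hJmeets
          have hJGs : J ∈ Gs := toGs J hJS hJF hJmeets
          have h2 := hrec J hJGs
          obtain ⟨_, Fs₂, Gs₂, hunion₂, hdisj₂, hcover₂, hleaves₂, hFdisj₂, hrec₂⟩ := h2
          have hFmem₂ : F ∈ S.erase J := Finset.mem_erase.mpr ⟨Ne.symm hJF, hFS⟩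
          rw [hleaves₂]
          by_contra hFnot
          have hFGs₂ : F ∈ Gs₂ := by
            have h3 := hFmem₂
            rw [hunion₂] at h3
            rcases Finset.mem_union.mp h3 with h | h
            · exact absurd h hFnot
            · exact h
          obtain ⟨v, hv⟩ := hFne
          obtain ⟨L, hLFs₂, hvL⟩ := hcover₂ F hFGs₂ v hv
          have hLF : L ≠ F := by
            rintro rfl
            exact (Finset.disjoint_left.mp hdisj₂ hLFs₂) hFGs₂
          have hLmem : L ∈ S.erase J := by
            rw [hunion₂]; exact Finset.mem_union_left _ hLFs₂
          have hLS : L ∈ S := Finset.mem_of_mem_erase hLmem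
          have hLne : (L ∩ F).Nonempty := ⟨v, Finset.mem_inter.mpr ⟨hvL, hv⟩⟩
          have hLJ : L = J := hBJ L hLS hLF hLne
          rw [hLJ] at hLmem
          exact (Finset.mem_erase.mp hLmem).1 rfl

theorem stmt10 (Δ : SimplicialComplexOn V)
    (hCM : IsCMForestFacets Δ.facets)
    (F : Finset V) (hF : IsLeafOf Δ.facets F) :
    IsCMForestFacets (Δ.facets \ closedNbhd Δ.facets F) := by
  obtain ⟨hforest, hgraft⟩ := hCM
  constructor
  · intro T hT hTne
    exact hforest T (hT.trans Finset.sdiff_subset) hTne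
  · exact grafted_sdiff_closedNbhd Δ.facets.card Δ.facets le_rfl hgraft F
      (Δ.nonempty_facet F hF.1) hF

end Statements
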